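/- Dual SDP form of Alberti's theorem for purified states: Let Y and Z be finite-dimensional complex vector spaces and let u, v ∈ Y⊗Z. Then F(Tr_Y(u u*), Tr_Y(v v*))² = inf{⟨Tr_Y(u u*), Z⟩ : Z a positive definite operator on Z with ⟨Tr_Y(v v*), Z⁻¹⟩ ≤ 1}, where F(P,Q) = Tr√(√P Q √P) is the fidelity and ⟨A,B⟩ = Tr(A*B). -/

import Mathlib

open Matrix
open scoped Kronecker ComplexOrder

noncomputable section

/-- The positive semidefinite square root of a positive semidefinite matrix
(the former Mathlib `Matrix.PosSemidef.sqrt`, removed since). -/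
def posSemidefSqrt {n : Type*} [Fintype n] [DecidableEq n] {A : Matrix n n ℂ}
    (hA : A.PosSemidef) : Matrix n n ℂ :=
  hA.1.eigenvectorUnitary.1 * diagonal ((↑) ∘ (√·) ∘ hA.1.eigenvalues) *
    (star hA.1.eigenvectorUnitary : Matrix n n ℂ)

/-- The trace norm `‖A‖₁ = Tr √(A* A)`. -/
def traceNorm {m n : Type*} [Fintype m] [Fintype n] [DecidableEq n]
    (A : Matrix m n ℂ) : ℝ :=
  (posSemidefSqrt (Matrix.posSemidef_conjTranspose_mul_self A)).trace.re

/-- The spectral norm (operator norm w.r.t. Euclidean norms). -/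
def specNorm {m n : Type*} [Fintype m] [Fintype n] [DecidableEq n]
    (A : Matrix m n ℂ) : ℝ :=
  ‖LinearMap.toContinuousLinearMap (Matrix.toEuclideanLin A)‖

/-- The Frobenius norm `‖A‖₂ = √Tr(A*A)`. -/
def frobeniusNorm {m n : Type*} [Fintype m] [Fintype n] (A : Matrix m n ℂ) : ℝ :=
  Real.sqrt ((Aᴴ * A).trace.re)

/-- Partial trace over the first tensor factor. -/
def ptraceFst {y z : Type*} [Fintype y] (M : Matrix (y × z) (y × z) ℂ) : Matrix z z ℂ :=
  Matrix.of fun a b => ∑ i, M (i, a) (i, b)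

/-- Partial trace over the second tensor factor. -/
def ptraceSnd {y z : Type*} [Fintype z] (M : Matrix (y × z) (y × z) ℂ) : Matrix y y ℂ :=
  Matrix.of fun i j => ∑ a, M (i, a) (j, a)

/-- The super-operator `Φ ⊗ 1_{L(W)}`, for `Φ : L(X) → L(Y)` and `W` indexed by `k`. -/
def tensorId {n m : Type*} [Fintype n] [Fintype m] (k : Type*) [Fintype k]
    (Φ : Matrix n n ℂ →ₗ[ℂ] Matrix m m ℂ) :
    Matrix (n × k) (n × k) ℂ →ₗ[ℂ] Matrix (m × k) (m × k) ℂ where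
  toFun M := Matrix.of fun p q => Φ (Matrix.of fun i j => M (i, p.2) (j, q.2)) p.1 q.1
  map_add' M N := by
    ext p q
    show Φ (Matrix.of fun i j => (M + N) (i, p.2) (j, q.2)) p.1 q.1 =
      Φ (Matrix.of fun i j => M (i, p.2) (j, q.2)) p.1 q.1 +
        Φ (Matrix.of fun i j => N (i, p.2) (j, q.2)) p.1 q.1
    have h : (Matrix.of fun i j => (M + N) (i, p.2) (j, q.2)) =
        (Matrix.of fun i j => M (i, p.2) (j, q.2)) +
          (Matrix.of fun i j => N (i, p.2) (j, q.2)) := rfl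
    rw [h, map_add]; rfl
  map_smul' c M := by
    ext p q
    show Φ (Matrix.of fun i j => (c • M) (i, p.2) (j, q.2)) p.1 q.1 =
      (c • Φ (Matrix.of fun i j => M (i, p.2) (j, q.2))) p.1 q.1
    have h : (Matrix.of fun i j => (c • M) (i, p.2) (j, q.2)) =
        c • (Matrix.of fun i j => M (i, p.2) (j, q.2)) := rfl
    rw [h, _root_.map_smul]

/-- The trace norm induced on super-operators. -/
def inducedTraceNorm {a b : Type*} [Fintype a] [DecidableEq a] [Fintype b] [DecidableEq b]
    (Φ : Matrix a a ℂ →ₗ[ℂ] Matrix b b ℂ) : ℝ :=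
  sSup {x : ℝ | ∃ X : Matrix a a ℂ, traceNorm X ≤ 1 ∧ x = traceNorm (Φ X)}

/-- The completely bounded trace norm (diamond norm):
`sup over k ≥ 1 of ‖Φ ⊗ 1_{L(ℂᵏ)}‖₁`. -/
def diamondNorm {n m : Type*} [Fintype n] [DecidableEq n] [Fintype m] [DecidableEq m]
    (Φ : Matrix n n ℂ →ₗ[ℂ] Matrix m m ℂ) : ℝ :=
  ⨆ k : ℕ, inducedTraceNorm (tensorId (Fin (k + 1)) Φ)


/-- Choi–Jamiołkowski representation `J(Φ) = Σ_{i,j} Φ(E_{i,j}) ⊗ E_{i,j}`. -/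
def choi {n m : Type*} [Fintype n] [DecidableEq n] [Fintype m]
    (Φ : Matrix n n ℂ →ₗ[ℂ] Matrix m m ℂ) : Matrix (m × n) (m × n) ℂ :=
  ∑ i : n, ∑ j : n, (Φ (Matrix.single i j 1)) ⊗ₖ (Matrix.single i j 1)

/-- A quantum channel: a completely positive and trace-preserving super-operator. -/
def IsQuantumChannel {n m : Type*} [Fintype n] [Fintype m]
    (Φ : Matrix n n ℂ →ₗ[ℂ] Matrix m m ℂ) : Prop :=
  (∀ (k : ℕ) (P : Matrix (n × Fin k) (n × Fin k) ℂ), P.PosSemidef →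
      (tensorId (Fin k) Φ P).PosSemidef) ∧
    ∀ X : Matrix n n ℂ, (Φ X).trace = X.trace

open Classical in
/-- Square root of a positive semidefinite matrix (junk value `0` otherwise). -/
def matSqrt {r : Type*} [Fintype r] [DecidableEq r] (P : Matrix r r ℂ) : Matrix r r ℂ :=
  if h : P.PosSemidef then posSemidefSqrt h else 0

/-- The fidelity `F(P,Q) = ‖√P √Q‖₁`. -/
def fidelity {r : Type*} [Fintype r] [DecidableEq r] (P Q : Matrix r r ℂ) : ℝ :=
  traceNorm (matSqrt P * matSqrt Q)


open scoped MatrixOrder in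
lemma Matrix.PosSemidef.posSemidefSqrt_eq_cfc {n : Type*} [Fintype n] [DecidableEq n]
    {A : Matrix n n ℂ} (hA : A.PosSemidef) : posSemidefSqrt hA = CFC.sqrt A := by
  rw [CFC.sqrt_eq_cfc, cfc_nnreal_eq_real _ A hA.nonneg, hA.1.cfc_eq]
  simp only [IsHermitian.cfc, Unitary.conjStarAlgAut_apply, posSemidefSqrt]
  congr 3
  ext i
  simp [Real.coe_sqrt, Real.coe_toNNReal', hA.eigenvalues_nonneg i]

/-- The square root of a positive semidefinite matrix. -/
def Matrix.PosSemidef.sqrt {n : Type*} [Fintype n] [DecidableEq n]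
    {A : Matrix n n ℂ} (hA : A.PosSemidef) : Matrix n n ℂ := posSemidefSqrt hA

open scoped MatrixOrder in
lemma Matrix.PosSemidef.posSemidef_sqrt {n : Type*} [Fintype n] [DecidableEq n]
    {A : Matrix n n ℂ} (hA : A.PosSemidef) : hA.sqrt.PosSemidef := by
  rw [Matrix.PosSemidef.sqrt, hA.posSemidefSqrt_eq_cfc]
  exact (CFC.sqrt_nonneg A).posSemidef

open scoped MatrixOrder in
lemma Matrix.PosSemidef.sqrt_mul_self {n : Type*} [Fintype n] [DecidableEq n]
    {A : Matrix n n ℂ} (hA : A.PosSemidef) : hA.sqrt * hA.sqrt = A := by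
  rw [Matrix.PosSemidef.sqrt, hA.posSemidefSqrt_eq_cfc]
  exact CFC.sqrt_mul_sqrt_self A hA.nonneg

open scoped MatrixOrder in
lemma Matrix.PosSemidef.eq_sqrt_of_sq_eq {n : Type*} [Fintype n] [DecidableEq n]
    {B : Matrix n n ℂ} (hB : B.PosSemidef) {A : Matrix n n ℂ} (hA : A.PosSemidef)
    (h : B ^ 2 = A) : B = hA.sqrt := by
  rw [Matrix.PosSemidef.sqrt, hA.posSemidefSqrt_eq_cfc, ← h, CFC.sqrt_sq B hB.nonneg]



namespace Alberti
set_option linter.unusedSectionVars false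
set_option maxHeartbeats 1000000

variable {n : Type*} [Fintype n] [DecidableEq n]

lemma diag_re_nonneg {A : Matrix n n ℂ} (hA : A.PosSemidef) (i : n) :
    0 ≤ (A i i).re := by
  have := hA.re_dotProduct_nonneg (Pi.single i 1)
  simpa [dotProduct, mulVec, Pi.single_apply, Finset.mul_sum, mul_ite,
    Finset.sum_ite_eq, Finset.sum_ite_eq'] using this

lemma trace_re_nonneg {A : Matrix n n ℂ} (hA : A.PosSemidef) :
    0 ≤ A.trace.re := by
  rw [Matrix.trace, Complex.re_sum]
  exact Finset.sum_nonneg fun i _ => diag_re_nonneg hA i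

lemma diag_re_pos {A : Matrix n n ℂ} (hA : A.PosDef) (i : n) :
    0 < (A i i).re := by
  have := hA.re_dotProduct_pos (x := Pi.single i 1) (by
    intro h
    have := congrFun h i
    simp [Pi.single_apply] at this)
  simpa [dotProduct, mulVec, Pi.single_apply, Finset.mul_sum, mul_ite,
    Finset.sum_ite_eq, Finset.sum_ite_eq'] using this

lemma trace_re_pos [Nonempty n] {A : Matrix n n ℂ} (hA : A.PosDef) :
    0 < A.trace.re := by
  rw [Matrix.trace, Complex.re_sum]
  exact Finset.sum_pos (fun i _ => diag_re_pos hA i) Finset.univ_nonempty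

lemma trace_mul_psd_re_nonneg {A B : Matrix n n ℂ} (hA : A.PosSemidef)
    (hB : B.PosSemidef) : 0 ≤ (A * B).trace.re := by
  have h1 : A * B = hA.sqrt * (hA.sqrt * B) := by
    rw [← mul_assoc, hA.sqrt_mul_self]
  have h2 : (A * B).trace = (hA.sqrt * B * hA.sqrt).trace := by
    rw [h1, Matrix.trace_mul_comm, mul_assoc]
  rw [h2]
  refine trace_re_nonneg ?_
  have := hB.conjTranspose_mul_mul_same (B := hA.sqrt)
  rwa [hA.posSemidef_sqrt.1.eq] at this
lemma psd_smul {A : Matrix n n ℂ} (hA : A.PosSemidef) {c : ℝ} (hc : 0 ≤ c) :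
    ((c : ℂ) • A).PosSemidef := by
  refine Matrix.PosSemidef.of_dotProduct_mulVec_nonneg ?_ ?_
  · rw [IsHermitian, conjTranspose_smul, hA.1.eq]
    simp
  · intro x
    rw [smul_mulVec, dotProduct_smul]
    exact smul_nonneg (by exact_mod_cast hc) (hA.dotProduct_mulVec_nonneg x)

lemma posdef_smul {A : Matrix n n ℂ} (hA : A.PosDef) {c : ℝ} (hc : 0 < c) :
    ((c : ℂ) • A).PosDef := by
  refine Matrix.PosDef.of_dotProduct_mulVec_pos ?_ ?_
  · rw [IsHermitian, conjTranspose_smul, hA.1.eq]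
    simp
  · intro x hx
    rw [smul_mulVec, dotProduct_smul]
    exact smul_pos (by exact_mod_cast hc) (hA.dotProduct_mulVec_pos hx)

lemma posdef_smul_one {c : ℝ} (hc : 0 < c) : ((c : ℂ) • (1 : Matrix n n ℂ)).PosDef :=
  posdef_smul Matrix.PosDef.one hc

lemma posdef_conj {S A : Matrix n n ℂ} (hS : S.PosDef) (hA : A.PosDef) :
    (S * A * S).PosDef := by
  refine Matrix.PosDef.of_dotProduct_mulVec_pos ?_ ?_
  · have := isHermitian_mul_mul_conjTranspose S hA.1
    rwa [hS.1.eq] at this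
  · intro x hx
    have hxS : S *ᵥ x ≠ 0 := by
      intro h
      apply hx
      have : S⁻¹ *ᵥ (S *ᵥ x) = x := by
        rw [mulVec_mulVec, Matrix.nonsing_inv_mul _ hS.det_pos.ne'.isUnit, one_mulVec]
      rw [h, mulVec_zero] at this
      exact this.symm
    have := hA.dotProduct_mulVec_pos hxS
    calc (0:ℂ) < star (S *ᵥ x) ⬝ᵥ A *ᵥ (S *ᵥ x) := this
    _ = star x ⬝ᵥ (S * A * S) *ᵥ x := by
        rw [star_mulVec, hS.1.eq, ← mulVec_mulVec, dotProduct_mulVec (star x ᵥ* S),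
          ← mulVec_mulVec, dotProduct_mulVec (star x), vecMul_vecMul]
        conv_rhs => rw [dotProduct_mulVec, vecMul_vecMul]
lemma posdef_sqrt {M : Matrix n n ℂ} (hM : M.PosDef) : hM.posSemidef.sqrt.PosDef := by
  have hR := hM.posSemidef.posSemidef_sqrt
  refine Matrix.PosDef.of_dotProduct_mulVec_pos hR.1 fun x hx => ?_
  rcases lt_or_eq_of_le (hR.dotProduct_mulVec_nonneg x) with h | h
  · exact h
  · exfalso
    have hRx : hM.posSemidef.sqrt *ᵥ x = 0 := (hR.dotProduct_mulVec_zero_iff x).mp h.symm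
    have hMx : M *ᵥ x = 0 := by
      rw [← hM.posSemidef.sqrt_mul_self, ← mulVec_mulVec, hRx, mulVec_zero]
    have h2 := hM.dotProduct_mulVec_pos hx
    rw [hMx, dotProduct_zero] at h2
    exact lt_irrefl _ h2

lemma herm_inv {S : Matrix n n ℂ} (hS : S.IsHermitian) : (S⁻¹).IsHermitian := by
  rw [IsHermitian, conjTranspose_nonsing_inv, hS.eq]

lemma sqrt_of_inv {Z : Matrix n n ℂ} (hZ : Z.PosDef) :
    hZ.inv.posSemidef.sqrt = (hZ.posSemidef.sqrt)⁻¹ := by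
  symm
  apply Matrix.PosSemidef.eq_sqrt_of_sq_eq ((posdef_sqrt hZ).posSemidef.inv)
  rw [pow_two, ← Matrix.mul_inv_rev, hZ.posSemidef.sqrt_mul_self]

lemma sqrt_mul_inv_sqrt {Z : Matrix n n ℂ} (hZ : Z.PosDef) :
    hZ.posSemidef.sqrt * hZ.inv.posSemidef.sqrt = 1 := by
  rw [sqrt_of_inv hZ, Matrix.mul_nonsing_inv _ (posdef_sqrt hZ).det_pos.ne'.isUnit]

lemma re_dot_self (x : n → ℂ) : (star x ⬝ᵥ x).re = ∑ i, ‖x i‖ ^ 2 := by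
  rw [dotProduct, Complex.re_sum]
  congr 1
  ext i
  rw [Complex.sq_norm, Complex.normSq_apply]
  simp [Complex.mul_re]

lemma dot_cs (x y : n → ℂ) :
    ‖star x ⬝ᵥ y‖ ≤ Real.sqrt (∑ i, ‖x i‖ ^ 2) * Real.sqrt (∑ i, ‖y i‖ ^ 2) := by
  let x' : EuclideanSpace ℂ n := WithLp.toLp 2 x
  let y' : EuclideanSpace ℂ n := WithLp.toLp 2 y
  have h1 : inner ℂ x' y' = star x ⬝ᵥ y := by
    rw [EuclideanSpace.inner_toLp_toLp, dotProduct_comm]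
  have h2 : ‖x'‖ = Real.sqrt (∑ i, ‖x i‖ ^ 2) := by
    rw [EuclideanSpace.norm_eq]
  have h3 : ‖y'‖ = Real.sqrt (∑ i, ‖y i‖ ^ 2) := by
    rw [EuclideanSpace.norm_eq]
  calc ‖star x ⬝ᵥ y‖ = ‖(inner ℂ x' y' : ℂ)‖ := by rw [h1]
  _ ≤ ‖x'‖ * ‖y'‖ := norm_inner_le_norm x' y'
  _ = _ := by rw [h2, h3]


lemma sum_dot_eq_trace {V : Matrix n n ℂ} (hV : V ∈ Matrix.unitaryGroup n ℂ)
    (M : Matrix n n ℂ) :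
    ∑ i, (star (fun k => V k i) ⬝ᵥ (M *ᵥ (fun k => V k i))) = M.trace := by
  have h1 : ∀ i, (star (fun k => V k i) ⬝ᵥ (M *ᵥ (fun k => V k i)))
      = (Vᴴ * M * V) i i := by
    intro i
    simp [dotProduct, mulVec, Matrix.mul_apply, conjTranspose_apply, Finset.mul_sum,
      Finset.sum_mul, mul_assoc]
    rw [Finset.sum_comm]
  calc ∑ i, (star (fun k => V k i) ⬝ᵥ (M *ᵥ (fun k => V k i)))
      = (Vᴴ * M * V).trace := by rw [Matrix.trace]; exact Finset.sum_congr rfl fun i _ => h1 i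
    _ = (V * Vᴴ * M).trace := by rw [Matrix.trace_mul_cycle]
    _ = M.trace := by
        rw [← Matrix.star_eq_conjTranspose, (Matrix.mem_unitaryGroup_iff).mp hV, one_mul]

lemma sum_orth_le_trace {ι : Type*} [Fintype ι] [DecidableEq ι] (w : ι → n → ℂ)
    (orth : ∀ i j, star (w i) ⬝ᵥ w j = if i = j then 1 else 0)
    {M : Matrix n n ℂ} (hM : M.PosSemidef) :
    ∑ i, (star (w i) ⬝ᵥ (M *ᵥ w i)).re ≤ M.trace.re := by
  let C : Matrix n ι ℂ := Matrix.of fun k i => w i k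
  have hCC : Cᴴ * C = 1 := by
    ext i j
    simpa [Matrix.mul_apply, conjTranspose_apply, C, Matrix.one_apply, dotProduct]
      using orth i j
  have hE : (1 - C * Cᴴ).PosSemidef := by
    have hEherm : (1 - C * Cᴴ)ᴴ = 1 - C * Cᴴ := by
      simp [conjTranspose_sub, conjTranspose_mul]
    have hidem : (1 - C * Cᴴ) * (1 - C * Cᴴ) = 1 - C * Cᴴ := by
      have : C * Cᴴ * (C * Cᴴ) = C * Cᴴ := by
        rw [Matrix.mul_assoc C Cᴴ (C * Cᴴ), ← Matrix.mul_assoc Cᴴ C Cᴴ, hCC, Matrix.one_mul]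
      rw [sub_mul, mul_sub, mul_sub, this]
      simp
    have := Matrix.posSemidef_conjTranspose_mul_self (1 - C * Cᴴ)
    rwa [hEherm, hidem] at this
  have h1 : ∀ i, (star (w i) ⬝ᵥ (M *ᵥ w i)) = (Cᴴ * M * C) i i := by
    intro i
    simp [dotProduct, mulVec, Matrix.mul_apply, conjTranspose_apply, C, Finset.mul_sum,
      Finset.sum_mul, mul_assoc]
    rw [Finset.sum_comm]
  have h2 : ∑ i, (star (w i) ⬝ᵥ (M *ᵥ w i)).re = (Cᴴ * M * C).trace.re := by
    rw [Matrix.trace, Complex.re_sum]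
    exact Finset.sum_congr rfl fun i _ => by rw [h1]; rfl
  have h3 : (Cᴴ * M * C).trace = (M * (C * Cᴴ)).trace := by
    rw [Matrix.trace_mul_cycle]
    exact (Matrix.trace_mul_comm _ _)
  have h4 : 0 ≤ (M * (1 - C * Cᴴ)).trace.re := trace_mul_psd_re_nonneg hM hE
  have h5 : (M * (1 - C * Cᴴ)).trace = M.trace - (M * (C * Cᴴ)).trace := by
    rw [mul_sub, Matrix.trace_sub, mul_one]
  rw [h2, h3]
  rw [h5] at h4
  simp only [Complex.sub_re] at h4
  linarith


lemma traceNorm_eq_sum (X : Matrix n n ℂ) :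
    traceNorm X = ∑ i, Real.sqrt ((Matrix.posSemidef_conjTranspose_mul_self X).1.eigenvalues i)
    := by
  set hX : (Xᴴ * X).PosSemidef := Matrix.posSemidef_conjTranspose_mul_self X
  rw [traceNorm, posSemidefSqrt, Matrix.trace_mul_cycle]
  rw [show (star hX.1.eigenvectorUnitary : Matrix n n ℂ) * (hX.1.eigenvectorUnitary : Matrix n n ℂ)
      = 1 from Unitary.coe_star_mul_self _, Matrix.one_mul, Matrix.trace_diagonal,
    Complex.re_sum]
  simp

lemma traceNorm_mul_le (A B : Matrix n n ℂ) :
    traceNorm (A * B) ≤ Real.sqrt ((Aᴴ * A).trace.re) * Real.sqrt ((Bᴴ * B).trace.re) := by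
  set X := A * B with hXdef
  set hX : (Xᴴ * X).PosSemidef := Matrix.posSemidef_conjTranspose_mul_self X with hXh
  set lam : n → ℝ := hX.1.eigenvalues with hlamdef
  have hlam : ∀ i, 0 ≤ lam i := hX.eigenvalues_nonneg
  set v : n → n → ℂ := fun i => ⇑(hX.1.eigenvectorBasis i) with hvdef
  have heig : ∀ i, (Xᴴ * X) *ᵥ v i = (lam i : ℂ) • v i := by
    intro i
    refine (hX.1.mulVec_eigenvectorBasis i).trans ?_
    ext k
    simp only [Pi.smul_apply, Complex.real_smul, smul_eq_mul]
    rfl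
  have horth : ∀ i j, star (v i) ⬝ᵥ v j = if i = j then 1 else 0 := by
    intro i j
    have := orthonormal_iff_ite.mp hX.1.eigenvectorBasis.orthonormal i j
    rw [← this, EuclideanSpace.inner_eq_star_dotProduct, dotProduct_comm]
  set u : n → n → ℂ := fun i => X *ᵥ v i with hudef
  set s : n → ℝ := fun i => Real.sqrt (lam i) with hsdef
  have hdotuu : ∀ i j, star (u i) ⬝ᵥ u j = (lam j : ℂ) * (if i = j then 1 else 0) := by
    intro i j
    calc star (u i) ⬝ᵥ u j = star (v i) ⬝ᵥ ((Xᴴ * X) *ᵥ v j) := by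
          rw [hudef]
          simp only
          rw [star_mulVec, dotProduct_mulVec, dotProduct_mulVec, vecMul_vecMul]
      _ = _ := by rw [heig j, dotProduct_smul, horth i j, smul_eq_mul]
  set J : Finset n := Finset.univ.filter (fun i => lam i ≠ 0) with hJdef
  have hsum_univ : ∑ i, s i = ∑ i ∈ J, s i := by
    symm
    apply Finset.sum_subset (Finset.subset_univ _)
    intro i _ hiJ
    have : lam i = 0 := by
      by_contra h
      exact hiJ (Finset.mem_filter.mpr ⟨Finset.mem_univ i, h⟩)
    rw [hsdef]; simp [this]
  set w : n → n → ℂ := fun i => ((s i)⁻¹ : ℂ) • u i with hwdef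
  have hs_pos : ∀ i ∈ J, 0 < s i := by
    intro i hi
    have := (Finset.mem_filter.mp hi).2
    exact Real.sqrt_pos.mpr (lt_of_le_of_ne (hlam i) (Ne.symm this))
  have hsq : ∀ i, (s i) ^ 2 = lam i := fun i => Real.sq_sqrt (hlam i)
  have horthw : ∀ i ∈ J, ∀ j ∈ J, star (w i) ⬝ᵥ w j = if i = j then 1 else 0 := by
    intro i hi j hj
    rw [hwdef]
    simp only [star_smul, smul_dotProduct, dotProduct_smul, star_trivial, RCLike.star_def,
      Complex.conj_ofReal, ← Complex.ofReal_inv]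
    rw [hdotuu i j, smul_eq_mul, smul_eq_mul]
    by_cases h : i = j
    · subst h
      have hsi := (hs_pos i hi).ne'
      have hsi' : ((s i : ℝ) : ℂ) ≠ 0 := by exact_mod_cast hsi
      simp only [if_true, ite_true, eq_self_iff_true, mul_one]
      rw [← hsq i]
      push_cast
      field_simp
    · simp [h]
  -- pointwise bound
  set a : n → ℝ := fun i => Real.sqrt ((star (w i) ⬝ᵥ ((A * Aᴴ) *ᵥ w i)).re) with hadef
  set b : n → ℝ := fun i => Real.sqrt ((star (v i) ⬝ᵥ ((Bᴴ * B) *ᵥ v i)).re) with hbdef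
  have hAAw : ∀ i, (star (w i) ⬝ᵥ ((A * Aᴴ) *ᵥ w i)).re = ∑ k, ‖(Aᴴ *ᵥ w i) k‖ ^ 2 := by
    intro i
    rw [← re_dot_self]
    congr 1
    rw [star_mulVec, conjTranspose_conjTranspose, dotProduct_mulVec, dotProduct_mulVec,
      vecMul_vecMul]
  have hBBv : ∀ i, (star (v i) ⬝ᵥ ((Bᴴ * B) *ᵥ v i)).re = ∑ k, ‖(B *ᵥ v i) k‖ ^ 2 := by
    intro i
    rw [← re_dot_self]
    congr 1
    rw [star_mulVec, dotProduct_mulVec, dotProduct_mulVec, vecMul_vecMul]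
  have hpoint : ∀ i ∈ J, s i ≤ a i * b i := by
    intro i hi
    have h1 : star (w i) ⬝ᵥ u i = (s i : ℂ) := by
      rw [hwdef]
      simp only [star_smul, smul_dotProduct, star_trivial, RCLike.star_def,
        Complex.conj_ofReal, ← Complex.ofReal_inv, smul_eq_mul]
      rw [hdotuu i i, if_pos rfl, mul_one, ← hsq i]
      have hsi := (hs_pos i hi).ne'
      have hsi' : ((s i : ℝ) : ℂ) ≠ 0 := by exact_mod_cast hsi
      push_cast
      field_simp
    have h2 : s i ≤ ‖star (w i) ⬝ᵥ u i‖ := by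
      rw [h1, Complex.norm_real]
      exact le_abs_self _
    have h3 : star (w i) ⬝ᵥ u i = star (Aᴴ *ᵥ w i) ⬝ᵥ (B *ᵥ v i) := by
      rw [star_mulVec, conjTranspose_conjTranspose, hudef]
      simp only
      rw [dotProduct_mulVec (star (w i)), dotProduct_mulVec (star (w i) ᵥ* A), vecMul_vecMul]
    have h4 := dot_cs (Aᴴ *ᵥ w i) (B *ᵥ v i)
    rw [← h3] at h4
    calc s i ≤ ‖star (w i) ⬝ᵥ u i‖ := h2
      _ ≤ Real.sqrt (∑ k, ‖(Aᴴ *ᵥ w i) k‖ ^ 2) * Real.sqrt (∑ k, ‖(B *ᵥ v i) k‖ ^ 2) := h4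
      _ = a i * b i := by rw [hadef, hbdef]; simp only; rw [hAAw, hBBv]
  -- sum bounds
  have hsuma : ∑ i ∈ J, (a i) ^ 2 ≤ ((A * Aᴴ)).trace.re := by
    have hAA : (A * Aᴴ).PosSemidef := Matrix.posSemidef_self_mul_conjTranspose A
    have : ∑ i ∈ J, (a i) ^ 2 = ∑ i : {x // x ∈ J}, (star (w i.1) ⬝ᵥ ((A * Aᴴ) *ᵥ w i.1)).re := by
      rw [← Finset.sum_attach J (fun i => (a i) ^ 2)]
      refine Finset.sum_congr rfl fun i _ => ?_
      rw [hadef]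
      simp only
      rw [Real.sq_sqrt]
      rw [hAAw]
      positivity
    rw [this]
    apply sum_orth_le_trace (fun i : {x // x ∈ J} => w i.1) ?_ hAA
    intro i j
    rw [horthw i.1 i.2 j.1 j.2]
    by_cases h : i = j
    · subst h; simp
    · rw [if_neg h, if_neg]
      exact fun hc => h (Subtype.ext hc)
  have hsumb : ∑ i ∈ J, (b i) ^ 2 ≤ ((Bᴴ * B)).trace.re := by
    have : ∑ i, (b i) ^ 2 = ((Bᴴ * B)).trace.re := by
      have := sum_dot_eq_trace (V := (hX.1.eigenvectorUnitary : Matrix n n ℂ))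
        (hX.1.eigenvectorUnitary.2) (Bᴴ * B)
      rw [← this, Complex.re_sum]
      refine Finset.sum_congr rfl fun i _ => ?_
      rw [hbdef]
      simp only
      rw [Real.sq_sqrt]
      · congr 2 <;>
        · funext k
          simp [v]
      · rw [hBBv]; positivity
    rw [← this]
    apply Finset.sum_le_sum_of_subset_of_nonneg (Finset.subset_univ _)
    intro i _ _
    positivity
  -- assemble
  have ha_nonneg : ∀ i, 0 ≤ a i := fun i => Real.sqrt_nonneg _
  have hb_nonneg : ∀ i, 0 ≤ b i := fun i => Real.sqrt_nonneg _
  have hcs : ∑ i ∈ J, a i * b i ≤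
      Real.sqrt (∑ i ∈ J, (a i)^2) * Real.sqrt (∑ i ∈ J, (b i)^2) := by
    have h := Finset.sum_mul_sq_le_sq_mul_sq J a b
    have hnn : 0 ≤ ∑ i ∈ J, a i * b i :=
      Finset.sum_nonneg fun i _ => mul_nonneg (ha_nonneg i) (hb_nonneg i)
    calc ∑ i ∈ J, a i * b i = Real.sqrt ((∑ i ∈ J, a i * b i) ^ 2) := by
          rw [Real.sqrt_sq hnn]
      _ ≤ Real.sqrt ((∑ i ∈ J, (a i)^2) * (∑ i ∈ J, (b i)^2)) := Real.sqrt_le_sqrt h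
      _ = _ := Real.sqrt_mul (Finset.sum_nonneg fun i _ => sq_nonneg _) _
  calc traceNorm X = ∑ i, s i := traceNorm_eq_sum X
    _ = ∑ i ∈ J, s i := hsum_univ
    _ ≤ ∑ i ∈ J, a i * b i := Finset.sum_le_sum hpoint
    _ ≤ Real.sqrt (∑ i ∈ J, (a i)^2) * Real.sqrt (∑ i ∈ J, (b i)^2) := hcs
    _ ≤ Real.sqrt ((A * Aᴴ).trace.re) * Real.sqrt ((Bᴴ * B).trace.re) := by
        apply mul_le_mul
        · exact Real.sqrt_le_sqrt hsuma
        · exact Real.sqrt_le_sqrt hsumb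
        · exact Real.sqrt_nonneg _
        · exact Real.sqrt_nonneg _
    _ = Real.sqrt ((Aᴴ * A).trace.re) * Real.sqrt ((Bᴴ * B).trace.re) := by
        rw [Matrix.trace_mul_comm]

lemma trace_re_mono {A B : Matrix n n ℂ} (h : (B - A).PosSemidef) :
    A.trace.re ≤ B.trace.re := by
  have := trace_re_nonneg h
  rw [Matrix.trace_sub, Complex.sub_re] at this
  linarith

lemma trace_mul_re_mono {A B R : Matrix n n ℂ} (h : (B - A).PosSemidef)
    (hR : R.PosSemidef) : (A * R).trace.re ≤ (B * R).trace.re := by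
  have := trace_mul_psd_re_nonneg h hR
  rw [sub_mul, Matrix.trace_sub, Complex.sub_re] at this
  linarith

lemma sqrt_mono {A B : Matrix n n ℂ} (hA : A.PosSemidef) (hB : B.PosSemidef)
    (hAB : (B - A).PosSemidef) : (hB.sqrt - hA.sqrt).PosSemidef := by
  set S := hA.sqrt with hSdef
  set T := hB.sqrt with hTdef
  have hS := hA.posSemidef_sqrt
  have hT := hB.posSemidef_sqrt
  have hM : (T - S).IsHermitian := hT.1.sub hS.1
  apply hM.posSemidef_iff_eigenvalues_nonneg.mpr
  intro i
  by_contra hneg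
  push_neg at hneg
  set t := hM.eigenvalues i with htdef
  set x : n → ℂ := ⇑(hM.eigenvectorBasis i) with hxdef
  have hx : x ≠ 0 := by
    have := hM.eigenvectorBasis.orthonormal.ne_zero i
    intro hc
    apply this
    ext k
    exact congrFun hc k
  have hev : (T - S) *ᵥ x = (t : ℂ) • x := by
    refine (hM.mulVec_eigenvectorBasis i).trans ?_
    ext k
    simp only [Pi.smul_apply, Complex.real_smul, smul_eq_mul]
    rfl
  have hBA : B - A = T * (T - S) + (T - S) * S := by
    have h1 : T * T = B := hB.sqrt_mul_self
    have h2 : S * S = A := hA.sqrt_mul_self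
    rw [mul_sub, sub_mul, h1, h2]
    abel
  have key : star x ⬝ᵥ ((B - A) *ᵥ x)
      = (t : ℂ) * (star x ⬝ᵥ (T *ᵥ x) + star x ⬝ᵥ (S *ᵥ x)) := by
    rw [hBA, add_mulVec, dotProduct_add]
    have k1 : star x ⬝ᵥ ((T * (T - S)) *ᵥ x) = (t:ℂ) * (star x ⬝ᵥ (T *ᵥ x)) := by
      rw [← mulVec_mulVec, hev, mulVec_smul, dotProduct_smul, smul_eq_mul]
    have k2 : star x ⬝ᵥ (((T - S) * S) *ᵥ x) = (t:ℂ) * (star x ⬝ᵥ (S *ᵥ x)) := by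
      rw [← mulVec_mulVec, dotProduct_mulVec]
      have h5 : star x ᵥ* (T - S) = (t:ℂ) • star x := by
        rw [← hM.eq, ← star_mulVec, hev, star_smul]
        simp [Complex.conj_ofReal]
      rw [h5, smul_dotProduct, smul_eq_mul]
    rw [k1, k2]
    ring
  have h0 : 0 ≤ star x ⬝ᵥ ((B - A) *ᵥ x) := hAB.dotProduct_mulVec_nonneg x
  have hTx : 0 ≤ star x ⬝ᵥ (T *ᵥ x) := hT.dotProduct_mulVec_nonneg x
  have hSx : 0 ≤ star x ⬝ᵥ (S *ᵥ x) := hS.dotProduct_mulVec_nonneg x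
  set dT := star x ⬝ᵥ (T *ᵥ x) with hdT
  set dS := star x ⬝ᵥ (S *ᵥ x) with hdS
  have hTim : dT.im = 0 ∧ 0 ≤ dT.re := by
    rw [Complex.le_def] at hTx; exact ⟨hTx.2.symm, by simpa using hTx.1⟩
  have hSim : dS.im = 0 ∧ 0 ≤ dS.re := by
    rw [Complex.le_def] at hSx; exact ⟨hSx.2.symm, by simpa using hSx.1⟩
  have h0' : 0 ≤ ((t:ℂ) * (dT + dS)).re := by
    rw [← key]; rw [Complex.le_def] at h0; simpa using h0.1
  have hre : ((t:ℂ) * (dT + dS)).re = t * (dT.re + dS.re) := by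
    simp [Complex.mul_re, Complex.add_re, Complex.add_im, hTim.1, hSim.1]
  have hsum0 : dT.re + dS.re = 0 := by
    rw [hre] at h0'
    nlinarith [hTim.2, hSim.2, (show t < 0 from hneg)]
  have hdTre : dT.re = 0 := by linarith [hTim.2, hSim.2]
  have hdSre : dS.re = 0 := by linarith [hTim.2, hSim.2]
  have hdT0 : dT = 0 := by
    apply Complex.ext <;> simp [hdTre, hTim.1]
  have hdS0 : dS = 0 := by
    apply Complex.ext <;> simp [hdSre, hSim.1]
  have hTx0 : T *ᵥ x = 0 := (hT.dotProduct_mulVec_zero_iff x).mp hdT0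
  have hSx0 : S *ᵥ x = 0 := (hS.dotProduct_mulVec_zero_iff x).mp hdS0
  have : (t:ℂ) • x = 0 := by
    rw [← hev, sub_mulVec, hTx0, hSx0, sub_zero]
  rcases smul_eq_zero.mp this with h | h
  · exact hneg.ne (by exact_mod_cast h)
  · exact hx h

lemma sqrt_add_smul_one {A : Matrix n n ℂ} (hA : A.PosSemidef) {c : ℝ} (hc : 0 ≤ c)
    (hAc : (A + (c : ℂ) • 1).PosSemidef) :
    (hA.sqrt + (Real.sqrt c : ℂ) • 1 - hAc.sqrt).PosSemidef := by
  set S := hA.sqrt with hSdef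
  set Y := S + (Real.sqrt c : ℂ) • 1 with hYdef
  have hY : Y.PosSemidef := hA.posSemidef_sqrt.add (psd_smul .one (Real.sqrt_nonneg c))
  have hYY : (Y * Y).PosSemidef := by
    have := hY.pow 2
    rwa [pow_two] at this
  have hdiff : (Y * Y - (A + (c : ℂ) • 1)).PosSemidef := by
    have hexp : Y * Y - (A + (c : ℂ) • 1)
        = (Real.sqrt c : ℂ) • S + (Real.sqrt c : ℂ) • S := by
      have hcc : ((Real.sqrt c : ℂ) • (1 : Matrix n n ℂ)) * ((Real.sqrt c : ℂ) • 1)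
          = (c : ℂ) • 1 := by
        rw [smul_mul_assoc, one_mul, smul_smul, ← Complex.ofReal_mul, Real.mul_self_sqrt hc]
      rw [hYdef, add_mul, mul_add, mul_add, hcc, hA.sqrt_mul_self, smul_mul_assoc, one_mul,
        mul_smul_comm, mul_one]
      abel
    rw [hexp]
    exact (psd_smul hA.posSemidef_sqrt (Real.sqrt_nonneg c)).add
      (psd_smul hA.posSemidef_sqrt (Real.sqrt_nonneg c))
  have hmono := sqrt_mono hAc hYY hdiff
  have hYsq : hYY.sqrt = Y := by
    symm
    exact hY.eq_sqrt_of_sq_eq hYY (by rw [pow_two])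
  rwa [hYsq] at hmono

lemma herm_le_smul_one {H : Matrix n n ℂ} (hH : H.IsHermitian) :
    ∃ c : ℝ, 0 ≤ c ∧ ((c : ℂ) • 1 - H).PosSemidef := by
  refine ⟨∑ i, |hH.eigenvalues i|,
    Finset.sum_nonneg (fun _ _ => abs_nonneg _), ?_⟩
  set c : ℝ := ∑ i, |hH.eigenvalues i| with hcdef
  have hone : ((c : ℂ) • 1 : Matrix n n ℂ)
      = (hH.eigenvectorUnitary : Matrix n n ℂ) * ((c : ℂ) • 1)
        * (star hH.eigenvectorUnitary : Matrix n n ℂ) := by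
    rw [mul_smul_comm, smul_mul_assoc, mul_one,
      show ((hH.eigenvectorUnitary : Matrix n n ℂ) * (star hH.eigenvectorUnitary : Matrix n n ℂ))
        = 1 from Unitary.coe_mul_star_self _]
  have hspec := hH.spectral_theorem
  rw [Unitary.conjStarAlgAut_apply] at hspec
  have hfact : (c : ℂ) • 1 - H = (hH.eigenvectorUnitary : Matrix n n ℂ)
      * ((c : ℂ) • 1 - diagonal (RCLike.ofReal ∘ hH.eigenvalues))
      * (star hH.eigenvectorUnitary : Matrix n n ℂ) := by
    rw [mul_sub, sub_mul, ← hone, ← hspec]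
  rw [hfact]
  have hdiag : ((c : ℂ) • 1 - diagonal (RCLike.ofReal ∘ hH.eigenvalues)
      : Matrix n n ℂ) = diagonal (fun i => ((c - hH.eigenvalues i : ℝ) : ℂ)) := by
    ext i j
    by_cases h : i = j
    · subst h
      simp [Matrix.sub_apply, Matrix.smul_apply, Matrix.one_apply_eq,
        Matrix.diagonal_apply_eq]
    · simp [Matrix.sub_apply, Matrix.smul_apply, Matrix.one_apply_ne h,
        Matrix.diagonal_apply_ne _ h]
  rw [hdiag]
  have hpsd : (diagonal (fun i => ((c - hH.eigenvalues i : ℝ) : ℂ)) : Matrix n n ℂ).PosSemidef := by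
    rw [Matrix.posSemidef_diagonal_iff]
    intro i
    rw [Complex.zero_le_real]
    have : |hH.eigenvalues i| ≤ c := by
      rw [hcdef]
      exact Finset.single_le_sum (f := fun j => |hH.eigenvalues j|)
        (fun j _ => abs_nonneg _) (Finset.mem_univ i)
    have := le_of_abs_le this
    linarith [neg_abs_le (hH.eigenvalues i), le_abs_self (hH.eigenvalues i)]
  rw [Matrix.star_eq_conjTranspose]
  exact hpsd.mul_mul_conjTranspose_same _

lemma sqrt_congr {A B : Matrix n n ℂ} (hA : A.PosSemidef) (hB : B.PosSemidef) (h : A = B) :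
    hA.sqrt = hB.sqrt := by subst h; rfl

lemma traceNorm_nonneg {m' : Type*} [Fintype m'] (X : Matrix m' n ℂ) : 0 ≤ traceNorm X :=
  trace_re_nonneg (Matrix.posSemidef_conjTranspose_mul_self X).posSemidef_sqrt

lemma lower_bound {P Q Z : Matrix n n ℂ} (hP : P.PosSemidef) (hQ : Q.PosSemidef)
    (hZ : Z.PosDef) (hfeas : (Q * Z⁻¹).trace.re ≤ 1) :
    traceNorm (hP.sqrt * hQ.sqrt) ^ 2 ≤ (P * Z).trace.re := by
  set SZ := hZ.posSemidef.sqrt with hSZdef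
  set SZi := hZ.inv.posSemidef.sqrt with hSZidef
  have hSZ := hZ.posSemidef.posSemidef_sqrt
  have hSZi := hZ.inv.posSemidef.posSemidef_sqrt
  set A := hP.sqrt * SZ with hAdef
  set B := SZi * hQ.sqrt with hBdef
  have hAB : A * B = hP.sqrt * hQ.sqrt := by
    rw [hAdef, hBdef, mul_assoc, ← mul_assoc SZ, sqrt_mul_inv_sqrt hZ, one_mul]
  have hAA : (Aᴴ * A).trace = (P * Z).trace := by
    rw [hAdef, conjTranspose_mul, hSZ.1.eq, hP.posSemidef_sqrt.1.eq]
    have e1 : SZ * hP.sqrt * (hP.sqrt * SZ) = SZ * (hP.sqrt * hP.sqrt * SZ) := by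
      simp only [mul_assoc]
    rw [e1, Matrix.trace_mul_comm]
    rw [show hP.sqrt * hP.sqrt * SZ * SZ = (hP.sqrt * hP.sqrt) * (SZ * SZ) from by
      simp only [mul_assoc]]
    rw [hP.sqrt_mul_self, hZ.posSemidef.sqrt_mul_self]
  have hBB : (Bᴴ * B).trace = (Q * Z⁻¹).trace := by
    rw [hBdef, conjTranspose_mul, hSZi.1.eq, hQ.posSemidef_sqrt.1.eq]
    have e1 : hQ.sqrt * SZi * (SZi * hQ.sqrt) = hQ.sqrt * (SZi * SZi * hQ.sqrt) := by
      simp only [mul_assoc]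
    rw [e1, Matrix.trace_mul_comm]
    rw [show SZi * SZi * hQ.sqrt * hQ.sqrt = (SZi * SZi) * (hQ.sqrt * hQ.sqrt) from by
      simp only [mul_assoc]]
    rw [hQ.sqrt_mul_self, hZ.inv.posSemidef.sqrt_mul_self, Matrix.trace_mul_comm]
  have hPZ : 0 ≤ (P * Z).trace.re := trace_mul_psd_re_nonneg hP hZ.posSemidef
  have hQZ : 0 ≤ (Q * Z⁻¹).trace.re := trace_mul_psd_re_nonneg hQ hZ.inv.posSemidef
  have hkey : traceNorm (hP.sqrt * hQ.sqrt)
      ≤ Real.sqrt ((P * Z).trace.re) * Real.sqrt ((Q * Z⁻¹).trace.re) := by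
    have := traceNorm_mul_le A B
    rw [hAB] at this
    calc traceNorm (hP.sqrt * hQ.sqrt)
        ≤ Real.sqrt ((Aᴴ * A).trace.re) * Real.sqrt ((Bᴴ * B).trace.re) := this
      _ = _ := by rw [hAA, hBB]
  have htn : 0 ≤ traceNorm (hP.sqrt * hQ.sqrt) := traceNorm_nonneg _
  calc traceNorm (hP.sqrt * hQ.sqrt) ^ 2
      ≤ (Real.sqrt ((P * Z).trace.re) * Real.sqrt ((Q * Z⁻¹).trace.re)) ^ 2 :=
        pow_le_pow_left₀ htn hkey 2
    _ = (P * Z).trace.re * (Q * Z⁻¹).trace.re := by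
        rw [mul_pow, Real.sq_sqrt hPZ, Real.sq_sqrt hQZ]
    _ ≤ (P * Z).trace.re * 1 := by
        exact mul_le_mul_of_nonneg_left hfeas hPZ
    _ = (P * Z).trace.re := mul_one _

lemma upper_bound {P Q : Matrix n n ℂ} [Nonempty n] (hP : P.PosSemidef) (hQ : Q.PosSemidef)
    {ε : ℝ} (hε : 0 < ε) (hε1 : ε ≤ 1) {c1 c2 : ℝ} (hc1 : 0 ≤ c1) (hc2 : 0 ≤ c2)
    (hH1 : ((c1 : ℂ) • 1 - (hQ.sqrt * P + P * hQ.sqrt + Q)).PosSemidef)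
    (hH2 : ((c2 : ℂ) • 1 - (P + (2 : ℂ) • hQ.sqrt)).PosSemidef) :
    ∃ Z : Matrix n n ℂ, Z.PosDef ∧ (Q * Z⁻¹).trace.re ≤ 1 ∧
      (P * Z).trace.re ≤ (traceNorm (hP.sqrt * hQ.sqrt)
        + (Fintype.card n : ℝ) * Real.sqrt (ε * (c1 + c2 + 1))) ^ 2 := by
  set sQ := hQ.sqrt with hsQdef
  have hsQ := hQ.posSemidef_sqrt
  set S : Matrix n n ℂ := sQ + (ε : ℂ) • 1 with hSdef
  have hS : S.PosDef := Matrix.PosDef.posSemidef_add hsQ (posdef_smul_one hε)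
  have hSherm : Sᴴ = S := hS.1.eq
  have hSdet : IsUnit S.det := hS.det_pos.ne'.isUnit
  have hSPS : (S * P * S).PosSemidef := by
    have := hP.mul_mul_conjTranspose_same (B := S)
    rwa [hSherm] at this
  have hSS : (S * S).PosDef := by
    have := posdef_conj hS Matrix.PosDef.one
    rwa [mul_one] at this
  set M : Matrix n n ℂ := S * P * S + (ε : ℂ) • (S * S) with hMdef
  have hM : M.PosDef := Matrix.PosDef.posSemidef_add hSPS (posdef_smul hSS hε)
  set R : Matrix n n ℂ := hM.posSemidef.sqrt with hRdef
  have hRps := hM.posSemidef.posSemidef_sqrt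
  have hR : R.PosDef := posdef_sqrt hM
  have hRdet : IsUnit R.det := hR.det_pos.ne'.isUnit
  set f : ℝ := R.trace.re with hfdef
  have hf : 0 < f := trace_re_pos hR
  set G : Matrix n n ℂ := S * R⁻¹ * S with hGdef
  have hG : G.PosDef := posdef_conj hS hR.inv
  refine ⟨(f : ℂ) • G, posdef_smul hG hf, ?_, ?_⟩
  case _ =>
    -- feasibility
    have hZinv : ((f : ℂ) • G)⁻¹ = ((f⁻¹ : ℝ) : ℂ) • (S⁻¹ * R * S⁻¹) := by
      apply Matrix.inv_eq_right_inv
      rw [smul_mul_assoc, mul_smul_comm, smul_smul, hGdef]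
      have e1 : S * R⁻¹ * S * (S⁻¹ * R * S⁻¹) = 1 := by
        have a1 : S * R⁻¹ * S * (S⁻¹ * R * S⁻¹)
            = S * (R⁻¹ * ((S * S⁻¹) * (R * S⁻¹))) := by simp only [mul_assoc]
        rw [a1, Matrix.mul_nonsing_inv _ hSdet, one_mul, ← mul_assoc R⁻¹ R,
          Matrix.nonsing_inv_mul _ hRdet, one_mul, Matrix.mul_nonsing_inv _ hSdet]
      rw [e1, ← Complex.ofReal_mul, mul_inv_cancel₀ hf.ne']
      simp
    rw [hZinv, mul_smul_comm, Matrix.trace_smul, smul_eq_mul, Complex.re_ofReal_mul]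
    have tr1 : (Q * (S⁻¹ * R * S⁻¹)).trace = ((S⁻¹ * Q * S⁻¹) * R).trace := by
      rw [show Q * (S⁻¹ * R * S⁻¹) = (Q * S⁻¹ * R) * S⁻¹ from by simp only [mul_assoc],
        Matrix.trace_mul_comm,
        show S⁻¹ * (Q * S⁻¹ * R) = (S⁻¹ * Q * S⁻¹) * R from by simp only [mul_assoc]]
    have hSiherm : (S⁻¹)ᴴ = S⁻¹ := (hS.1.inv).eq
    have hdiffpsd : ((1 : Matrix n n ℂ) - S⁻¹ * Q * S⁻¹).PosSemidef := by
      have hSSQ : (S * S - Q).PosSemidef := by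
        have hexp : S * S - Q = (ε : ℂ) • sQ + ((ε : ℂ) • sQ + ((ε * ε : ℝ) : ℂ) • 1) := by
          rw [hSdef]
          push_cast
          simp only [mul_add, add_mul, smul_mul_assoc, mul_smul_comm, one_mul, mul_one,
            smul_smul, show sQ * sQ = Q from hQ.sqrt_mul_self]
          module
        rw [hexp]
        exact (psd_smul hsQ hε.le).add ((psd_smul hsQ hε.le).add
          (psd_smul Matrix.PosSemidef.one (mul_nonneg hε.le hε.le)))
      have hconj : (S⁻¹ * (S * S - Q) * S⁻¹).PosSemidef := by
        have := hSSQ.mul_mul_conjTranspose_same (B := S⁻¹)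
        rwa [hSiherm] at this
      have hid : S⁻¹ * (S * S - Q) * S⁻¹ = 1 - S⁻¹ * Q * S⁻¹ := by
        rw [mul_sub, sub_mul]
        congr 1
        rw [show S⁻¹ * (S * S) = (S⁻¹ * S) * S from by simp only [mul_assoc],
          Matrix.nonsing_inv_mul _ hSdet, one_mul, Matrix.mul_nonsing_inv _ hSdet]
      rwa [hid] at hconj
    have hmono := trace_mul_re_mono hdiffpsd hRps
    rw [one_mul] at hmono
    rw [tr1]
    calc f⁻¹ * ((S⁻¹ * Q * S⁻¹) * R).trace.re ≤ f⁻¹ * f :=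
        mul_le_mul_of_nonneg_left hmono (inv_nonneg.mpr hf.le)
      _ = 1 := inv_mul_cancel₀ hf.ne'
  case _ =>
    -- objective value
    have hobj : (P * ((f : ℂ) • G)).trace.re ≤ f * f := by
      rw [mul_smul_comm, Matrix.trace_smul, smul_eq_mul, Complex.re_ofReal_mul]
      have tr2 : (P * G).trace = ((S * P * S) * R⁻¹).trace := by
        rw [hGdef,
          show P * (S * R⁻¹ * S) = (P * S * R⁻¹) * S from by simp only [mul_assoc],
          Matrix.trace_mul_comm,
          show S * (P * S * R⁻¹) = (S * P * S) * R⁻¹ from by simp only [mul_assoc]]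
      have hmono2 : ((S * P * S) * R⁻¹).trace.re ≤ (M * R⁻¹).trace.re := by
        apply trace_mul_re_mono _ hR.inv.posSemidef
        rw [hMdef, add_sub_cancel_left]
        exact (psd_smul hSS.posSemidef hε.le)
      have hMR : (M * R⁻¹).trace = R.trace := by
        rw [show M = R * R from (hM.posSemidef.sqrt_mul_self).symm,
          show R * R * R⁻¹ = R * (R * R⁻¹) from by simp only [mul_assoc],
          Matrix.mul_nonsing_inv _ hRdet, mul_one]
      rw [tr2]
      calc f * ((S * P * S) * R⁻¹).trace.re ≤ f * (M * R⁻¹).trace.re :=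
          mul_le_mul_of_nonneg_left hmono2 hf.le
        _ = f * f := by rw [hMR]
    refine hobj.trans ?_
    -- now bound f ≤ traceNorm + n √(ε c)
    set K : Matrix n n ℂ := sQ * P * sQ with hKdef
    have hK : K.PosSemidef := by
      have := hP.mul_mul_conjTranspose_same (B := sQ)
      rwa [hsQ.1.eq] at this
    set c : ℝ := c1 + c2 + 1 with hcdef
    have hc : 0 ≤ c := by positivity
    have hεc : 0 ≤ ε * c := by positivity
    have hKc : (K + ((ε * c : ℝ) : ℂ) • 1).PosSemidef :=
      hK.add (psd_smul Matrix.PosSemidef.one hεc)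
    -- M ≤ K + (ε c) 1
    have hMexp : M = K + (ε : ℂ) • (sQ * P + P * sQ + Q)
        + ((ε * ε : ℝ) : ℂ) • (P + (2 : ℂ) • sQ) + ((ε * ε * ε : ℝ) : ℂ) • 1 := by
      rw [hMdef, hSdef, hKdef]
      push_cast
      simp only [mul_add, add_mul, smul_mul_assoc, mul_smul_comm, one_mul, mul_one,
        smul_smul, show sQ * sQ = Q from hQ.sqrt_mul_self]
      module
    have hrem : 0 ≤ ε * c - (ε * c1 + ε * ε * c2 + ε * ε * ε) := by
      have h1 : ε * ε ≤ ε := by nlinarith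
      have h2 : ε * ε * ε ≤ ε := by nlinarith
      have h3 : ε * ε * c2 ≤ ε * c2 := by nlinarith
      rw [hcdef]
      nlinarith
    have hdiffM : (K + ((ε * c : ℝ) : ℂ) • 1 - M).PosSemidef := by
      have hexp2 : K + ((ε * c : ℝ) : ℂ) • 1 - M
          = (ε : ℂ) • ((c1 : ℂ) • 1 - (sQ * P + P * sQ + Q))
            + ((ε * ε : ℝ) : ℂ) • ((c2 : ℂ) • 1 - (P + (2 : ℂ) • sQ))
            + ((ε * c - (ε * c1 + ε * ε * c2 + ε * ε * ε) : ℝ) : ℂ) • 1 := by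
        rw [hMexp]
        push_cast
        module
      rw [hexp2]
      exact ((psd_smul hH1 hε.le).add (psd_smul hH2 (by positivity))).add
        (psd_smul Matrix.PosSemidef.one hrem)
    -- trace sqrt monotone
    have hstep1 : f ≤ hKc.sqrt.trace.re :=
      trace_re_mono (sqrt_mono hM.posSemidef hKc hdiffM)
    have hstep2 : hKc.sqrt.trace.re ≤ hK.sqrt.trace.re
        + (Fintype.card n : ℝ) * Real.sqrt (ε * c) := by
      have hpsd := sqrt_add_smul_one hK hεc hKc
      have h := trace_re_mono hpsd
      rw [Matrix.trace_add, Matrix.trace_smul, Matrix.trace_one, Complex.add_re,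
        smul_eq_mul] at h
      have : ((Real.sqrt (ε * c) : ℂ) * (Fintype.card n : ℂ)).re
          = Real.sqrt (ε * c) * (Fintype.card n : ℝ) := by
        rw [Complex.re_ofReal_mul]
        simp
      rw [this] at h
      linarith [h]
    have hKF : hK.sqrt.trace.re = traceNorm (hP.sqrt * hQ.sqrt) := by
      have e : (hP.sqrt * hQ.sqrt)ᴴ * (hP.sqrt * hQ.sqrt) = K := by
        rw [conjTranspose_mul, hP.posSemidef_sqrt.1.eq, hQ.posSemidef_sqrt.1.eq,
          show hQ.sqrt * hP.sqrt * (hP.sqrt * hQ.sqrt)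
            = hQ.sqrt * (hP.sqrt * hP.sqrt) * hQ.sqrt from by simp only [mul_assoc],
          hP.sqrt_mul_self]
      rw [traceNorm, ← Matrix.PosSemidef.sqrt, sqrt_congr (Matrix.posSemidef_conjTranspose_mul_self _) hK e]
    have hfb : f ≤ traceNorm (hP.sqrt * hQ.sqrt)
        + (Fintype.card n : ℝ) * Real.sqrt (ε * c) := by
      rw [← hKF]
      linarith
    have hfnn : 0 ≤ f := hf.le
    calc f * f = f ^ 2 := (sq f).symm
      _ ≤ (traceNorm (hP.sqrt * hQ.sqrt) + (Fintype.card n : ℝ) * Real.sqrt (ε * c)) ^ 2 :=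
        pow_le_pow_left₀ hfnn hfb 2
      _ = _ := by rw [hcdef]


lemma ptrace_psd {m' : Type*} [Fintype m'] (u : m' × n → ℂ) :
    (ptraceFst (vecMulVec u (star u))).PosSemidef := by
  have : ptraceFst (vecMulVec u (star u))
      = (Matrix.of fun (i : m') (a : n) => star (u (i, a)))ᴴ
        * (Matrix.of fun (i : m') (a : n) => star (u (i, a))) := by
    ext a b
    simp [ptraceFst, Matrix.mul_apply, vecMulVec_apply, conjTranspose_apply, Pi.star_apply,
      mul_comm]
  rw [this]
  exact Matrix.posSemidef_conjTranspose_mul_self _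

end Alberti

/-- Dual SDP form of Alberti's theorem for purified states. -/
theorem alberti_dual_sdp {m r : ℕ} (u v : Fin m × Fin r → ℂ) :
    sInf {x : ℝ | ∃ Z : Matrix (Fin r) (Fin r) ℂ, Z.PosDef ∧
        ((ptraceFst (vecMulVec v (star v)))ᴴ * Z⁻¹).trace.re ≤ 1 ∧
        x = ((ptraceFst (vecMulVec u (star u)))ᴴ * Z).trace.re} =
      fidelity (ptraceFst (vecMulVec u (star u)))
        (ptraceFst (vecMulVec v (star v))) ^ 2 := by
  classical
  have hP : (ptraceFst (vecMulVec u (star u))).PosSemidef := Alberti.ptrace_psd u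
  have hQ : (ptraceFst (vecMulVec v (star v))).PosSemidef := Alberti.ptrace_psd v
  set P := ptraceFst (vecMulVec u (star u)) with hPdef
  set Q := ptraceFst (vecMulVec v (star v)) with hQdef
  rw [hP.1.eq, hQ.1.eq]
  have hfid : fidelity P Q = traceNorm (hP.sqrt * hQ.sqrt) := by
    unfold fidelity matSqrt
    rw [dif_pos hP, dif_pos hQ]
    rfl
  rw [hfid]
  set F := traceNorm (hP.sqrt * hQ.sqrt) with hFdef
  have hF0 : 0 ≤ F := Alberti.traceNorm_nonneg _
  set S : Set ℝ := {x : ℝ | ∃ Z : Matrix (Fin r) (Fin r) ℂ, Z.PosDef ∧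
      (Q * Z⁻¹).trace.re ≤ 1 ∧ x = (P * Z).trace.re} with hSdef
  rcases isEmpty_or_nonempty (Fin r) with hcase | hcase
  · have htr : ∀ M : Matrix (Fin r) (Fin r) ℂ, M.trace = 0 := by
      intro M
      rw [Matrix.trace, Finset.univ_eq_empty, Finset.sum_empty]
    have hset : S = {0} := by
      ext x
      simp only [hSdef, Set.mem_setOf_eq, Set.mem_singleton_iff]
      constructor
      · rintro ⟨Z, hZ, hfe, rfl⟩
        rw [htr, Complex.zero_re]
      · rintro rfl
        exact ⟨1, Matrix.PosDef.one, by rw [htr, Complex.zero_re]; norm_num,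
          by rw [htr, Complex.zero_re]⟩
    rw [hset, csInf_singleton]
    have hF : F = 0 := by
      rw [hFdef]
      unfold traceNorm
      rw [htr, Complex.zero_re]
    rw [hF]
    norm_num
  · have hlow : ∀ x ∈ S, F ^ 2 ≤ x := by
      rintro x ⟨Z, hZ, hfe, rfl⟩
      exact Alberti.lower_bound hP hQ hZ hfe
    have hbdd : BddBelow S := ⟨F ^ 2, hlow⟩
    have hherm1 : (hQ.sqrt * P + P * hQ.sqrt + Q).IsHermitian := by
      have h1 : (hQ.sqrt * P + P * hQ.sqrt).IsHermitian := by
        rw [Matrix.IsHermitian, conjTranspose_add, conjTranspose_mul, conjTranspose_mul,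
          hP.1.eq, hQ.posSemidef_sqrt.1.eq, add_comm]
      exact h1.add hQ.1
    have hherm2 : (P + (2 : ℂ) • hQ.sqrt).IsHermitian := by
      rw [Matrix.IsHermitian, conjTranspose_add, conjTranspose_smul, hP.1.eq,
        hQ.posSemidef_sqrt.1.eq]
      norm_num
    obtain ⟨c1, hc1, hH1⟩ := Alberti.herm_le_smul_one hherm1
    obtain ⟨c2, hc2, hH2⟩ := Alberti.herm_le_smul_one hherm2
    set c : ℝ := c1 + c2 + 1 with hcdef
    have hcpos : 0 < c := by positivity
    set N : ℝ := (Fintype.card (Fin r) : ℝ) with hNdef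
    have hN0 : 0 ≤ N := by positivity
    have hub : ∀ δ : ℝ, 0 < δ → sInf S ≤ (F + δ) ^ 2 := by
      intro δ hδ
      set ε : ℝ := min 1 (δ ^ 2 / (N ^ 2 * c + 1)) with hεdef
      have hεpos : 0 < ε := lt_min one_pos (by positivity)
      have hε1 : ε ≤ 1 := min_le_left _ _
      obtain ⟨Z, hZ, hfe, hval⟩ := Alberti.upper_bound hP hQ hεpos hε1 hc1 hc2 hH1 hH2
      have hmem : (P * Z).trace.re ∈ S := ⟨Z, hZ, hfe, rfl⟩
      have hstep : (F + N * Real.sqrt (ε * c)) ^ 2 ≤ (F + δ) ^ 2 := by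
        have h1 : N * Real.sqrt (ε * c) ≤ δ := by
          have e1 : N * Real.sqrt (ε * c) = Real.sqrt (N ^ 2 * (ε * c)) := by
            rw [Real.sqrt_mul (sq_nonneg N), Real.sqrt_sq hN0]
          rw [e1]
          have h2 : ε ≤ δ ^ 2 / (N ^ 2 * c + 1) := min_le_right _ _
          have hpos : (0:ℝ) < N ^ 2 * c + 1 := by positivity
          have h4 : ε * (N ^ 2 * c + 1) ≤ δ ^ 2 := (le_div_iff₀ hpos).mp h2
          have h3 : N ^ 2 * (ε * c) ≤ δ ^ 2 := by nlinarith [hεpos.le]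
          calc Real.sqrt (N ^ 2 * (ε * c)) ≤ Real.sqrt (δ ^ 2) := Real.sqrt_le_sqrt h3
            _ = δ := Real.sqrt_sq hδ.le
        apply pow_le_pow_left₀ (by positivity)
        linarith
      calc sInf S ≤ (P * Z).trace.re := csInf_le hbdd hmem
        _ ≤ (F + N * Real.sqrt (ε * c)) ^ 2 := hval
        _ ≤ (F + δ) ^ 2 := hstep
    have hne : S.Nonempty := by
      obtain ⟨Z, hZ, hfe, hval⟩ :=
        Alberti.upper_bound hP hQ one_pos le_rfl hc1 hc2 hH1 hH2
      exact ⟨_, Z, hZ, hfe, rfl⟩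
    have hge : sInf S ≤ F ^ 2 := by
      by_contra hcon
      push_neg at hcon
      set δ : ℝ := min 1 ((sInf S - F ^ 2) / (2 * F + 2)) with hδdef
      have hδpos : 0 < δ := lt_min one_pos (div_pos (by linarith) (by linarith))
      have hδ1 : δ ≤ 1 := min_le_left _ _
      have hδ2 : δ ≤ (sInf S - F ^ 2) / (2 * F + 2) := min_le_right _ _
      have h2 : δ * (2 * F + 2) ≤ sInf S - F ^ 2 := by
        rw [← le_div_iff₀ (by linarith : (0:ℝ) < 2 * F + 2)]
        exact hδ2
      have h3 := hub δ hδpos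
      nlinarith [sq_nonneg (F + δ), hδpos.le]
    exact le_antisymm hge (le_csInf hne hlow)

end
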